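/- Let γ ∈ Adm(μ,ν) be a coupling with W_ψ(μ,ν) > 0. Then γ is optimal for W_ψ (i.e. achieves the infimum defining W_ψ(μ,ν)) if and only if ∫_{X×X} ψ(d(x,y)/W_ψ(μ,ν)) dγ(x,y) ≤ 1. -/

import Mathlib

open MeasureTheory Filter Set ENNReal NNReal Topology

noncomputable section

/-- Luxemburg (Orlicz) norm of a nonnegative function. -/
def luxNorm (ψ : ℝ≥0∞ → ℝ≥0∞) {Ω : Type*} [MeasurableSpace Ω]
    (ν : Measure Ω) (u : Ω → ℝ≥0∞) : ℝ≥0∞ :=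
  sInf {l : ℝ≥0∞ | 0 < l ∧ ∫⁻ x, ψ (u x / l) ∂ν ≤ 1}

/-- Standard assumptions on the Orlicz function `ψ`: convex, lower semicontinuous,
non-decreasing, `ψ 0 = 0`, `ψ x → ∞` as `x → ∞`. -/
structure IsOrlicz (ψ : ℝ≥0∞ → ℝ≥0∞) : Prop where
  convex : ∀ a b x y : ℝ≥0∞, a + b = 1 → ψ (a * x + b * y) ≤ a * ψ x + b * ψ y
  lsc : LowerSemicontinuous ψ
  mono : Monotone ψ
  zero : ψ 0 = 0
  tendsto_top : ∀ C : ℝ≥0∞, ∃ M : ℝ≥0∞, ∀ x, M ≤ x → C ≤ ψ x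

/-- Superlinearity at infinity: `ψ x / x → ∞`. -/
def Superlinear (ψ : ℝ≥0∞ → ℝ≥0∞) : Prop :=
  ∀ C : ℝ≥0, ∃ M : ℝ≥0, ∀ x : ℝ≥0, M ≤ x → (C : ℝ≥0∞) * x ≤ ψ x

/-- Null right derivative at `0`: `ψ x / x → 0` as `x → 0⁺`. -/
def FlatAtZero (ψ : ℝ≥0∞ → ℝ≥0∞) : Prop :=
  ∀ ε : ℝ≥0, 0 < ε → ∃ δ : ℝ≥0, 0 < δ ∧ ∀ x : ℝ≥0, 0 < x → x ≤ δ → ψ x ≤ (ε : ℝ≥0∞) * x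

/-- Legendre conjugate `ψ*(y) = sup_{x ≥ 0} (x y - ψ x)`. -/
def conjOrlicz (ψ : ℝ≥0∞ → ℝ≥0∞) (y : ℝ≥0∞) : ℝ≥0∞ :=
  ⨆ x : ℝ≥0, (x : ℝ≥0∞) * y - ψ x

/-- Generalized inverse of `ψ` (with the convention of the paper). -/
def psiInv (ψ : ℝ≥0∞ → ℝ≥0∞) (s : ℝ≥0∞) : ℝ≥0∞ :=
  sSup {r : ℝ≥0∞ | ψ r ≤ s}

/-- `(X, τ, d)` is an extended Polish space: `d` is an extended distance, complete,
`d`-convergence implies `τ`-convergence, and `d` is `τ × τ` lower semicontinuous. -/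
structure IsExtPolish (X : Type*) [TopologicalSpace X] (d : X → X → ℝ≥0∞) : Prop where
  symm : ∀ x y, d x y = d y x
  eq_zero_iff : ∀ x y, d x y = 0 ↔ x = y
  triangle : ∀ x y z, d x z ≤ d x y + d y z
  complete : ∀ u : ℕ → X,
    (∀ ε : ℝ≥0∞, 0 < ε → ∃ N, ∀ m n, N ≤ m → N ≤ n → d (u m) (u n) < ε) →
    ∃ x, Tendsto (fun n => d (u n) x) atTop (𝓝 0)
  compat : ∀ (u : ℕ → X) (x : X),
    Tendsto (fun n => d (u n) x) atTop (𝓝 0) → Tendsto u atTop (𝓝 x)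
  lsc : LowerSemicontinuous fun p : X × X => d p.1 p.2

/-- Admissible transport plans between `μ` and `ν`. -/
def Couplings {X : Type*} [MeasurableSpace X] (μ ν : Measure X) : Set (Measure (X × X)) :=
  {γ | IsProbabilityMeasure γ ∧ γ.map Prod.fst = μ ∧ γ.map Prod.snd = ν}

/-- The Wasserstein–Orlicz extended distance. -/
def Wass (ψ : ℝ≥0∞ → ℝ≥0∞) {X : Type*} [MeasurableSpace X] (d : X → X → ℝ≥0∞)
    (μ ν : Measure X) : ℝ≥0∞ :=
  ⨅ γ ∈ Couplings μ ν, luxNorm ψ γ (fun p : X × X => d p.1 p.2)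

/-- Absolutely continuous curve with finite `L^ψ` energy with respect to the
extended distance `ρ`, on the interval `[a, b]`. -/
def IsACpsi (ψ : ℝ≥0∞ → ℝ≥0∞) {A : Type*} (ρ : A → A → ℝ≥0∞)
    (a b : ℝ) (u : ℝ → A) : Prop :=
  ∃ m : ℝ → ℝ≥0∞, luxNorm ψ (volume.restrict (Set.Icc a b)) m < ⊤ ∧
    ∀ s t : ℝ, a ≤ s → s ≤ t → t ≤ b → ρ (u s) (u t) ≤ ∫⁻ r in Set.Icc s t, m r

/-- The metric derivative of the curve `u` (with values in a space with extended
distance `ρ`) at time `t` within the interval `I` equals `L`. -/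
def HasMDeriv {A : Type*} (ρ : A → A → ℝ≥0∞) (u : ℝ → A) (I : Set ℝ) (t : ℝ)
    (L : ℝ≥0∞) : Prop :=
  Tendsto (fun h : ℝ => ρ (u (t + h)) (u t) / ENNReal.ofReal |h|)
    (𝓝[{h : ℝ | h ≠ 0 ∧ t + h ∈ I}] 0) (𝓝 L)

/-- The support of a Borel measure. -/
def measSupport {Y : Type*} [TopologicalSpace Y] [MeasurableSpace Y] (μ : Measure Y) : Set Y :=
  {y | ∀ U ∈ 𝓝 y, 0 < μ U}

/-- characterization of optimal plans for `W_ψ`. -/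
theorem optimal_iff_integral_le_one {X : Type*} [TopologicalSpace X] [PolishSpace X]
    [MeasurableSpace X] [BorelSpace X]
    (d : X → X → ℝ≥0∞) (hX : IsExtPolish X d)
    (ψ : ℝ≥0∞ → ℝ≥0∞) (hψ : IsOrlicz ψ)
    (μ ν : Measure X) [IsProbabilityMeasure μ] [IsProbabilityMeasure ν]
    (γ : Measure (X × X)) (hγ : γ ∈ Couplings μ ν)
    (hpos : 0 < Wass ψ d μ ν) :
    luxNorm ψ γ (fun p : X × X => d p.1 p.2) = Wass ψ d μ ν ↔
      ∫⁻ p : X × X, ψ (d p.1 p.2 / Wass ψ d μ ν) ∂γ ≤ 1 := by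
  set W := Wass ψ d μ ν with hW
  set f : X × X → ℝ≥0∞ := fun p => d p.1 p.2 with hf
  have hWle : W ≤ luxNorm ψ γ f := iInf₂_le γ hγ
  -- trivial case W = ⊤
  rcases eq_or_ne W ⊤ with hWtop | hWfin
  · constructor
    · intro _
      have : ∀ p : X × X, ψ (f p / W) = 0 := by
        intro p; rw [hWtop, ENNReal.div_top, hψ.zero]
      exact ((lintegral_congr fun p => this p).trans lintegral_zero).le.trans zero_le_one
    · intro _
      exact le_antisymm (hWtop ▸ le_top) hWle
  constructor
  · -- forward direction
    intro hopt
    set c : ℕ → ℝ≥0∞ := fun n => W + ((n : ℝ≥0∞) + 1)⁻¹ with hc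
    have hcW : ∀ n, W < c n := fun n =>
      ENNReal.lt_add_right hWfin (by simp)
    have hcmem : ∀ n, 0 < c n ∧ ∫⁻ p, ψ (f p / c n) ∂γ ≤ 1 := by
      intro n
      refine ⟨lt_of_lt_of_le hpos (le_of_lt (hcW n)), ?_⟩
      have hlt : sInf {l : ℝ≥0∞ | 0 < l ∧ ∫⁻ p, ψ (f p / l) ∂γ ≤ 1} < c n := by
        have : luxNorm ψ γ f < c n := hopt ▸ hcW n
        exact this
      obtain ⟨l, hlS, hl⟩ := sInf_lt_iff.mp hlt
      calc ∫⁻ p, ψ (f p / c n) ∂γ ≤ ∫⁻ p, ψ (f p / l) ∂γ :=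
            lintegral_mono fun p => hψ.mono (ENNReal.div_le_div_left hl.le _)
        _ ≤ 1 := hlS.2
    -- the functions ψ (f p / c n) increase to ψ (f p / W)
    have hmono_c : ∀ m n : ℕ, m ≤ n → c n ≤ c m := by
      intro m n hmn
      refine add_le_add le_rfl ?_
      have h1 : ((m:ℝ≥0∞)+1) ≤ ((n:ℝ≥0∞)+1) := by exact_mod_cast Nat.succ_le_succ hmn
      exact ENNReal.inv_le_inv.mpr h1
    have hmono : Monotone fun n (p : X × X) => ψ (f p / c n) := by
      intro m n hmn p
      exact hψ.mono (ENNReal.div_le_div_left (hmono_c m n hmn) _)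
    have htend : ∀ x : ℝ≥0∞, Tendsto (fun n => x / c n) atTop (𝓝 (x / W)) := by
      intro x
      have h1 : Tendsto c atTop (𝓝 W) := by
        have h0 := ENNReal.tendsto_inv_nat_nhds_zero.comp (tendsto_add_atTop_nat 1)
        have : Tendsto (fun n : ℕ => ((n : ℝ≥0∞) + 1)⁻¹) atTop (𝓝 0) := by
          convert h0 using 2 with n
          simp [Function.comp]
        simpa using tendsto_const_nhds.add this
      have h2 : Tendsto (fun n => (c n)⁻¹) atTop (𝓝 W⁻¹) :=
        ENNReal.tendsto_inv_iff.mpr h1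
      have h3 : Tendsto (fun n => x * (c n)⁻¹) atTop (𝓝 (x * W⁻¹)) :=
        ENNReal.Tendsto.const_mul h2 (Or.inl (ENNReal.inv_ne_zero.mpr hWfin))
      simpa [div_eq_mul_inv] using h3
    have hsup : ∀ x : ℝ≥0∞, (⨆ n, ψ (x / c n)) = ψ (x / W) := by
      intro x
      apply le_antisymm
      · exact iSup_le fun n => hψ.mono (ENNReal.div_le_div_left (hcW n).le _)
      · refine le_of_forall_lt fun b hb => ?_
        have hev : ∀ᶠ y in 𝓝 (x / W), b < ψ y := hψ.lsc (x / W) b hb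
        obtain ⟨n, hn⟩ := ((htend x).eventually hev).exists
        exact lt_of_lt_of_le hn (le_iSup (fun n => ψ (x / c n)) n)
    have hfm : Measurable f := hX.lsc.measurable
    have hmeas : ∀ n, Measurable fun p : X × X => ψ (f p / c n) := by
      intro n
      exact hψ.mono.measurable.comp (hfm.div measurable_const)
    calc ∫⁻ p, ψ (f p / W) ∂γ = ∫⁻ p, ⨆ n, ψ (f p / c n) ∂γ := by
          simp only [hsup]
      _ = ⨆ n, ∫⁻ p, ψ (f p / c n) ∂γ := lintegral_iSup hmeas hmono
      _ ≤ 1 := iSup_le fun n => (hcmem n).2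
  · -- reverse direction
    intro hint
    refine le_antisymm ?_ hWle
    exact sInf_le ⟨hpos, hint⟩
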